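/- For every p ∈ (1, ∞), the second derivative of Q_p(q) := 2E_{1,p}(q)/K_{1,p}(q) - 1 at q = 0 equals 4p/(2 - 3p); in particular it is negative and strictly increasing in p. -/

import Mathlib

open Real

/-- The complete `p`-elliptic integral of the first kind. -/
noncomputable def K1 (p q : ℝ) : ℝ :=
  ∫ z in (0:ℝ)..1, (1 - q ^ 2 * z ^ 2) ^ (-(1/2) : ℝ) * (1 - z ^ 2) ^ (-(1 / p))

/-- The complete `p`-elliptic integral of the second kind. -/
noncomputable def E1 (p q : ℝ) : ℝ :=
  ∫ z in (0:ℝ)..1, (1 - q ^ 2 * z ^ 2) ^ ((1/2) : ℝ) * (1 - z ^ 2) ^ (-(1 / p))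

/-- The ratio function `Q_p`. -/
noncomputable def Qp (p q : ℝ) : ℝ := 2 * E1 p q / K1 p q - 1

namespace QpAux
open MeasureTheory Set intervalIntegral Metric Filter Topology

noncomputable def Gp (p q : ℝ) : ℝ :=
  ∫ z in (0:ℝ)..1, z^2 * (1 - q^2*z^2) ^ (-(1/2):ℝ) * (1 - z^2) ^ (-(1/p))

noncomputable def Hp (p q : ℝ) : ℝ :=
  ∫ z in (0:ℝ)..1, z^2 * (1 - q^2*z^2) ^ (-(3/2):ℝ) * (1 - z^2) ^ (-(1/p))

noncomputable def Ap (p : ℝ) : ℝ := ∫ z in (0:ℝ)..1, (1 - z^2) ^ (-(1/p))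
noncomputable def Bp (p : ℝ) : ℝ := ∫ z in (0:ℝ)..1, z^2 * (1 - z^2) ^ (-(1/p))

variable {p : ℝ}

lemma intA (hp : 1 < p) :
    IntervalIntegrable (fun z : ℝ => (1 - z^2) ^ (-(1/p))) volume 0 1 := by
  have hp0 : 0 < p := by linarith
  have h1 : IntervalIntegrable (fun x : ℝ => x ^ (-(1/p))) volume 0 1 :=
    intervalIntegrable_rpow' (by rw [neg_lt, neg_neg]; exact (div_lt_one hp0).2 hp)
  have h2 : IntervalIntegrable (fun x : ℝ => (1 - x) ^ (-(1/p))) volume 0 1 := by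
    have := h1.comp_sub_left 1
    simpa using this.symm
  apply h2.mono_fun (by fun_prop : Measurable fun z : ℝ => (1 - z^2) ^ (-(1/p))).aestronglyMeasurable
  filter_upwards [ae_restrict_mem measurableSet_uIoc] with z hz
  rw [uIoc_of_le (by norm_num : (0:ℝ) ≤ 1)] at hz
  obtain ⟨hz0, hz1⟩ := hz
  have h1z : (0:ℝ) ≤ 1 - z := by linarith
  have hfac : (1 : ℝ) - z^2 = (1-z)*(1+z) := by ring
  rw [Real.norm_eq_abs, Real.norm_eq_abs, abs_of_nonneg (rpow_nonneg (by nlinarith) _),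
    abs_of_nonneg (rpow_nonneg h1z _), hfac, mul_rpow h1z (by linarith)]
  calc (1-z)^(-(1/p)) * (1+z)^(-(1/p)) ≤ (1-z)^(-(1/p)) * 1 := by
        apply mul_le_mul_of_nonneg_left _ (rpow_nonneg h1z _)
        exact rpow_le_one_of_one_le_of_nonpos (by linarith) (neg_nonpos.2 (by positivity))
    _ = (1-z)^(-(1/p)) := mul_one _

lemma rpow_le_two {x e : ℝ} (h1 : 3/4 ≤ x) (h2 : x ≤ 1) (he : -2 ≤ e) : x ^ e ≤ 2 := by
  have hx0 : (0:ℝ) < x := by linarith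
  calc x ^ e ≤ x ^ (-2:ℝ) := rpow_le_rpow_of_exponent_ge hx0 h2 he
    _ = (x^2)⁻¹ := by
        rw [show (-2:ℝ) = -(2:ℕ) by norm_num, rpow_neg hx0.le, rpow_natCast]
    _ ≤ 2 := by
        rw [inv_le_comm₀ (by positivity) (by norm_num)]
        nlinarith

/-- Interval integrability of the general parametric integrand. -/
lemma int_param (hp : 1 < p) {e q : ℝ} (he : -2 ≤ e) (hq : |q| < 1/2) (k : ℕ) :
    IntervalIntegrable (fun z : ℝ => z^k * (1 - q^2*z^2)^e * (1 - z^2)^(-(1/p)))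
      volume 0 1 := by
  apply ((intA hp).const_mul 2).mono_fun
    (by fun_prop : Measurable fun z : ℝ => z^k * (1 - q^2*z^2)^e * (1 - z^2)^(-(1/p))).aestronglyMeasurable
  filter_upwards [ae_restrict_mem measurableSet_uIoc] with z hz
  rw [uIoc_of_le (by norm_num : (0:ℝ) ≤ 1)] at hz
  obtain ⟨hz0, hz1⟩ := hz
  have hq2 : q^2 < 1/4 := by
    have := abs_nonneg q
    nlinarith [sq_abs q]
  have hb1 : 3/4 ≤ 1 - q^2*z^2 := by nlinarith [sq_nonneg q, sq_nonneg z]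
  have hb2 : 1 - q^2*z^2 ≤ 1 := by nlinarith [sq_nonneg q, sq_nonneg z]
  have hA : (0:ℝ) ≤ (1 - z^2)^(-(1/p)) := rpow_nonneg (by nlinarith) _
  rw [Real.norm_eq_abs, Real.norm_eq_abs, abs_mul, abs_mul,
    abs_of_nonneg (rpow_nonneg (by linarith : (0:ℝ) ≤ 1 - q^2*z^2) _), abs_of_nonneg hA,
    abs_of_nonneg (pow_nonneg hz0.le k), abs_of_nonneg (by positivity : (0:ℝ) ≤ 2 * (1-z^2)^(-(1/p)))]
  have hzk : z^k ≤ 1 := pow_le_one₀ hz0.le hz1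
  have h2b : (1 - q^2*z^2)^e ≤ 2 := rpow_le_two hb1 hb2 he
  calc z^k * (1 - q^2*z^2)^e * (1 - z^2)^(-(1/p))
      ≤ 1 * 2 * (1 - z^2)^(-(1/p)) := by
        apply mul_le_mul_of_nonneg_right _ hA
        apply mul_le_mul hzk h2b (rpow_nonneg (by linarith) _) (by norm_num)
    _ = 2 * (1 - z^2)^(-(1/p)) := by ring

lemma intK1 (hp : 1 < p) {q : ℝ} (hq : |q| < 1/2) :
    IntervalIntegrable (fun z : ℝ => (1 - q^2*z^2)^(-(1/2):ℝ) * (1 - z^2)^(-(1/p)))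
      volume 0 1 := by
  have := int_param hp (by norm_num : (-2:ℝ) ≤ -(1/2)) hq 0
  simpa using this

lemma intE1 (hp : 1 < p) {q : ℝ} (hq : |q| < 1/2) :
    IntervalIntegrable (fun z : ℝ => (1 - q^2*z^2)^((1/2):ℝ) * (1 - z^2)^(-(1/p)))
      volume 0 1 := by
  have := int_param hp (by norm_num : (-2:ℝ) ≤ (1/2)) hq 0
  simpa using this

lemma K1_pos (hp : 1 < p) {q : ℝ} (hq : |q| < 1/2) : 0 < K1 p q := by
  have h : K1 p q = ∫ z in (0:ℝ)..1, (1 - q^2*z^2)^(-(1/2):ℝ) * (1 - z^2)^(-(1/p)) := rfl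
  rw [h]
  apply intervalIntegral.intervalIntegral_pos_of_pos_on (intK1 hp hq)
  · intro z hz
    obtain ⟨hz0, hz1⟩ := hz
    have hq2 : q^2 < 1/4 := by have := abs_nonneg q; nlinarith [sq_abs q]
    have : (0:ℝ) < 1 - q^2*z^2 := by nlinarith [sq_nonneg q, sq_nonneg z]
    exact mul_pos (rpow_pos_of_pos this _) (rpow_pos_of_pos (by nlinarith) _)
  · norm_num

lemma K1_zero (hp : 1 < p) : K1 p 0 = Ap p := by
  unfold K1 Ap
  congr 1; funext z; norm_num

lemma E1_zero (hp : 1 < p) : E1 p 0 = Ap p := by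
  unfold E1 Ap
  congr 1; funext z; norm_num

lemma Gp_zero (hp : 1 < p) : Gp p 0 = Bp p := by
  unfold Gp Bp
  congr 1; funext z; norm_num

lemma Hp_zero (hp : 1 < p) : Hp p 0 = Bp p := by
  unfold Hp Bp
  congr 1; funext z; norm_num

lemma Bp_pos (hp : 1 < p) : 0 < Bp p := by
  unfold Bp
  apply intervalIntegral.intervalIntegral_pos_of_pos_on
  · have := int_param hp (by norm_num : (-2:ℝ) ≤ (1/2)) (q := 0) (by norm_num) 2
    simpa using this
  · intro z hz
    obtain ⟨hz0, hz1⟩ := hz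
    exact mul_pos (by positivity) (rpow_pos_of_pos (by nlinarith) _)
  · norm_num

lemma Ap_pos (hp : 1 < p) : 0 < Ap p := by
  have := K1_pos hp (q := 0) (by norm_num)
  rwa [K1_zero hp] at this

lemma abs_lt_half_of_ball {q₀ x : ℝ} (hq : |q₀| < 1/2) (hx : x ∈ ball q₀ (1/2 - |q₀|)) :
    |x| < 1/2 := by
  rw [mem_ball, Real.dist_eq] at hx
  calc |x| = |x - q₀ + q₀| := by ring_nf
    _ ≤ |x - q₀| + |q₀| := abs_add_le _ _
    _ < (1/2 - |q₀|) + |q₀| := by linarith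
    _ = 1/2 := by ring

lemma hasDerivAt_K1 (hp : 1 < p) {q₀ : ℝ} (hq : |q₀| < 1/2) :
    HasDerivAt (K1 p) (q₀ * Hp p q₀) q₀ := by
  have hε0 : 0 < 1/2 - |q₀| := by linarith
  have key := intervalIntegral.hasDerivAt_integral_of_dominated_loc_of_deriv_le
    (μ := volume) (a := 0) (b := 1) (x₀ := q₀) (s := ball q₀ (1/2 - |q₀|))
    (F := fun q z => (1 - q^2*z^2)^(-(1/2):ℝ) * (1 - z^2)^(-(1/p)))
    (F' := fun q z => (q * z^2 * (1 - q^2*z^2)^(-(3/2):ℝ)) * (1 - z^2)^(-(1/p)))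
    (bound := fun z => (1 - z^2)^(-(1/p))) (ball_mem_nhds q₀ hε0)
    (Eventually.of_forall fun x =>
      (by fun_prop : Measurable fun z : ℝ => (1 - x^2*z^2)^(-(1/2):ℝ) * (1 - z^2)^(-(1/p))).aestronglyMeasurable)
    (intK1 hp hq)
    ((by fun_prop : Measurable fun z : ℝ => (q₀ * z^2 * (1 - q₀^2*z^2)^(-(3/2):ℝ)) * (1 - z^2)^(-(1/p))).aestronglyMeasurable)
    ?_ (intA hp) ?_
  · have h2 : (∫ z in (0:ℝ)..1, (q₀ * z^2 * (1 - q₀^2*z^2)^(-(3/2):ℝ)) * (1 - z^2)^(-(1/p)))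
        = q₀ * Hp p q₀ := by
      rw [show (fun z : ℝ => (q₀ * z^2 * (1 - q₀^2*z^2)^(-(3/2):ℝ)) * (1 - z^2)^(-(1/p)))
          = fun z : ℝ => q₀ * (z^2 * (1 - q₀^2*z^2)^(-(3/2):ℝ) * (1 - z^2)^(-(1/p))) from
          funext fun z => by ring]
      rw [intervalIntegral.integral_const_mul]
      rfl
    rw [← h2]
    exact key.2
  · refine Eventually.of_forall fun z hz x hx => ?_
    rw [uIoc_of_le (by norm_num : (0:ℝ) ≤ 1)] at hz
    obtain ⟨hz0, hz1⟩ := hz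
    have hx2 : |x| < 1/2 := abs_lt_half_of_ball hq hx
    have hq2 : x^2 < 1/4 := by have := abs_nonneg x; nlinarith [sq_abs x]
    have hb1 : 3/4 ≤ 1 - x^2*z^2 := by nlinarith [sq_nonneg x, sq_nonneg z]
    have hb2 : 1 - x^2*z^2 ≤ 1 := by nlinarith [sq_nonneg x, sq_nonneg z]
    have hA : (0:ℝ) ≤ (1 - z^2)^(-(1/p)) := rpow_nonneg (by nlinarith) _
    show ‖(x * z^2 * (1 - x^2*z^2)^(-(3/2):ℝ)) * (1 - z^2)^(-(1/p))‖ ≤ (1 - z^2)^(-(1/p))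
    rw [Real.norm_eq_abs, abs_mul, abs_mul, abs_mul, abs_of_nonneg hA,
      abs_of_nonneg (rpow_nonneg (by linarith : (0:ℝ) ≤ 1 - x^2*z^2) (-(3/2):ℝ)),
      abs_of_nonneg (by positivity : (0:ℝ) ≤ z^2)]
    have h2b : (1 - x^2*z^2)^(-(3/2):ℝ) ≤ 2 := rpow_le_two hb1 hb2 (by norm_num)
    calc |x| * z^2 * (1 - x^2*z^2)^(-(3/2):ℝ) * (1 - z^2)^(-(1/p))
        ≤ (1/2) * 1 * 2 * (1 - z^2)^(-(1/p)) := by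
          apply mul_le_mul_of_nonneg_right _ hA
          have hz2 : z^2 ≤ 1 := by nlinarith
          have h0 : (0:ℝ) ≤ |x| * z^2 := by positivity
          nlinarith [abs_nonneg x, rpow_nonneg (by linarith : (0:ℝ) ≤ 1 - x^2*z^2) (-(3/2):ℝ),
            mul_le_mul h2b hz2 (by positivity) (by norm_num)]
      _ = (1 - z^2)^(-(1/p)) := by ring
  · refine Eventually.of_forall fun z hz x hx => ?_
    rw [uIoc_of_le (by norm_num : (0:ℝ) ≤ 1)] at hz
    obtain ⟨hz0, hz1⟩ := hz
    have hx2 : |x| < 1/2 := abs_lt_half_of_ball hq hx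
    have hq2 : x^2 < 1/4 := by have := abs_nonneg x; nlinarith [sq_abs x]
    have hpos : (0:ℝ) < 1 - x^2*z^2 := by nlinarith [sq_nonneg x, sq_nonneg z]
    have hbase : HasDerivAt (fun x : ℝ => 1 - x^2*z^2) (-(2*x*z^2)) x := by
      simpa using ((hasDerivAt_pow 2 x).mul_const (z^2)).const_sub 1
    have h := (hbase.rpow_const (p := (-(1/2):ℝ)) (Or.inl hpos.ne')).mul_const
      ((1 - z^2)^(-(1/p)))
    convert h using 1
    · rfl
    rw [show (-(1/2):ℝ) - 1 = -(3/2) by norm_num]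
    ring

lemma hasDerivAt_E1 (hp : 1 < p) {q₀ : ℝ} (hq : |q₀| < 1/2) :
    HasDerivAt (E1 p) (-(q₀ * Gp p q₀)) q₀ := by
  have hε0 : 0 < 1/2 - |q₀| := by linarith
  have key := intervalIntegral.hasDerivAt_integral_of_dominated_loc_of_deriv_le
    (μ := volume) (a := 0) (b := 1) (x₀ := q₀) (s := ball q₀ (1/2 - |q₀|))
    (F := fun q z => (1 - q^2*z^2)^((1/2):ℝ) * (1 - z^2)^(-(1/p)))
    (F' := fun q z => (-(q * z^2) * (1 - q^2*z^2)^(-(1/2):ℝ)) * (1 - z^2)^(-(1/p)))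
    (bound := fun z => (1 - z^2)^(-(1/p))) (ball_mem_nhds q₀ hε0)
    (Eventually.of_forall fun x =>
      (by fun_prop : Measurable fun z : ℝ => (1 - x^2*z^2)^((1/2):ℝ) * (1 - z^2)^(-(1/p))).aestronglyMeasurable)
    (intE1 hp hq)
    ((by fun_prop : Measurable fun z : ℝ => (-(q₀ * z^2) * (1 - q₀^2*z^2)^(-(1/2):ℝ)) * (1 - z^2)^(-(1/p))).aestronglyMeasurable)
    ?_ (intA hp) ?_
  · have h2 : (∫ z in (0:ℝ)..1, (-(q₀ * z^2) * (1 - q₀^2*z^2)^(-(1/2):ℝ)) * (1 - z^2)^(-(1/p)))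
        = -(q₀ * Gp p q₀) := by
      rw [show (fun z : ℝ => (-(q₀ * z^2) * (1 - q₀^2*z^2)^(-(1/2):ℝ)) * (1 - z^2)^(-(1/p)))
          = fun z : ℝ => (-q₀) * (z^2 * (1 - q₀^2*z^2)^(-(1/2):ℝ) * (1 - z^2)^(-(1/p))) from
          funext fun z => by ring]
      rw [intervalIntegral.integral_const_mul]
      show -q₀ * Gp p q₀ = _
      ring
    rw [← h2]
    exact key.2
  · refine Eventually.of_forall fun z hz x hx => ?_
    rw [uIoc_of_le (by norm_num : (0:ℝ) ≤ 1)] at hz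
    obtain ⟨hz0, hz1⟩ := hz
    have hx2 : |x| < 1/2 := abs_lt_half_of_ball hq hx
    have hq2 : x^2 < 1/4 := by have := abs_nonneg x; nlinarith [sq_abs x]
    have hb1 : 3/4 ≤ 1 - x^2*z^2 := by nlinarith [sq_nonneg x, sq_nonneg z]
    have hb2 : 1 - x^2*z^2 ≤ 1 := by nlinarith [sq_nonneg x, sq_nonneg z]
    have hA : (0:ℝ) ≤ (1 - z^2)^(-(1/p)) := rpow_nonneg (by nlinarith) _
    show ‖(-(x * z^2) * (1 - x^2*z^2)^(-(1/2):ℝ)) * (1 - z^2)^(-(1/p))‖ ≤ (1 - z^2)^(-(1/p))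
    rw [Real.norm_eq_abs, abs_mul, abs_mul, abs_neg, abs_mul, abs_of_nonneg hA,
      abs_of_nonneg (rpow_nonneg (by linarith : (0:ℝ) ≤ 1 - x^2*z^2) (-(1/2):ℝ)),
      abs_of_nonneg (by positivity : (0:ℝ) ≤ z^2)]
    have h2b : (1 - x^2*z^2)^(-(1/2):ℝ) ≤ 2 := rpow_le_two hb1 hb2 (by norm_num)
    calc |x| * z^2 * (1 - x^2*z^2)^(-(1/2):ℝ) * (1 - z^2)^(-(1/p))
        ≤ (1/2) * 1 * 2 * (1 - z^2)^(-(1/p)) := by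
          apply mul_le_mul_of_nonneg_right _ hA
          have hz2 : z^2 ≤ 1 := by nlinarith
          nlinarith [abs_nonneg x, rpow_nonneg (by linarith : (0:ℝ) ≤ 1 - x^2*z^2) (-(1/2):ℝ),
            mul_le_mul h2b hz2 (by positivity) (by norm_num)]
      _ = (1 - z^2)^(-(1/p)) := by ring
  · refine Eventually.of_forall fun z hz x hx => ?_
    rw [uIoc_of_le (by norm_num : (0:ℝ) ≤ 1)] at hz
    obtain ⟨hz0, hz1⟩ := hz
    have hx2 : |x| < 1/2 := abs_lt_half_of_ball hq hx
    have hq2 : x^2 < 1/4 := by have := abs_nonneg x; nlinarith [sq_abs x]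
    have hpos : (0:ℝ) < 1 - x^2*z^2 := by nlinarith [sq_nonneg x, sq_nonneg z]
    have hbase : HasDerivAt (fun x : ℝ => 1 - x^2*z^2) (-(2*x*z^2)) x := by
      simpa using ((hasDerivAt_pow 2 x).mul_const (z^2)).const_sub 1
    have h := (hbase.rpow_const (p := ((1/2):ℝ)) (Or.inl hpos.ne')).mul_const
      ((1 - z^2)^(-(1/p)))
    convert h using 1
    · rfl
    rw [show ((1/2):ℝ) - 1 = -(1/2) by norm_num]
    ring

lemma contAt (hp : 1 < p) {e : ℝ} (he : -2 ≤ e) :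
    ContinuousAt (fun q : ℝ => ∫ z in (0:ℝ)..1, z^2 * (1 - q^2*z^2)^e * (1 - z^2)^(-(1/p))) 0 := by
  apply intervalIntegral.continuousAt_of_dominated_interval
    (bound := fun z : ℝ => 2 * (1 - z^2)^(-(1/p)))
    (Eventually.of_forall fun x =>
      (by fun_prop : Measurable fun z : ℝ => z^2 * (1 - x^2*z^2)^e * (1 - z^2)^(-(1/p))).aestronglyMeasurable)
    ?_ ((intA hp).const_mul 2) ?_
  · filter_upwards [Metric.ball_mem_nhds (0:ℝ) (by norm_num : (0:ℝ) < 1/2)] with x hx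
    refine Eventually.of_forall fun z hz => ?_
    rw [uIoc_of_le (by norm_num : (0:ℝ) ≤ 1)] at hz
    obtain ⟨hz0, hz1⟩ := hz
    have hx2 : |x| < 1/2 := by simpa [Real.dist_eq] using hx
    have hq2 : x^2 < 1/4 := by have := abs_nonneg x; nlinarith [sq_abs x]
    have hb1 : 3/4 ≤ 1 - x^2*z^2 := by nlinarith [sq_nonneg x, sq_nonneg z]
    have hb2 : 1 - x^2*z^2 ≤ 1 := by nlinarith [sq_nonneg x, sq_nonneg z]
    have hA : (0:ℝ) ≤ (1 - z^2)^(-(1/p)) := rpow_nonneg (by nlinarith) _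
    rw [Real.norm_eq_abs, abs_mul, abs_mul, abs_of_nonneg hA,
      abs_of_nonneg (rpow_nonneg (by linarith : (0:ℝ) ≤ 1 - x^2*z^2) e),
      abs_of_nonneg (by positivity : (0:ℝ) ≤ z^2)]
    have h2b : (1 - x^2*z^2)^e ≤ 2 := rpow_le_two hb1 hb2 he
    have hz2 : z^2 ≤ 1 := by nlinarith
    calc z^2 * (1 - x^2*z^2)^e * (1 - z^2)^(-(1/p))
        ≤ 1 * 2 * (1 - z^2)^(-(1/p)) := by
          apply mul_le_mul_of_nonneg_right _ hA
          exact mul_le_mul hz2 h2b (rpow_nonneg (by linarith) _) (by norm_num)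
      _ = 2 * (1 - z^2)^(-(1/p)) := by ring
  · refine Eventually.of_forall fun z hz => ?_
    have hc : ContinuousAt (fun x : ℝ => 1 - x^2*z^2) 0 := by fun_prop
    have : ContinuousAt (fun x : ℝ => (1 - x^2*z^2)^e) 0 := by
      apply hc.rpow_const
      left
      norm_num
    exact ((this.const_mul (z^2)).mul continuousAt_const)

lemma contGp (hp : 1 < p) : ContinuousAt (Gp p) 0 := by
  have := contAt hp (e := -(1/2)) (by norm_num)
  exact this

lemma contHp (hp : 1 < p) : ContinuousAt (Hp p) 0 := by
  have := contAt hp (e := -(3/2)) (by norm_num)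
  exact this

lemma intBp (hp : 1 < p) :
    IntervalIntegrable (fun z : ℝ => z^2 * (1 - z^2)^(-(1/p))) volume 0 1 := by
  have := int_param hp (by norm_num : (-2:ℝ) ≤ (1/2)) (q := 0) (by norm_num) 2
  simpa using this

lemma Ap_eq (hp : 1 < p) : Ap p = (3 - 2/p) * Bp p := by
  have hp0 : 0 < p := by linarith
  set s : ℝ := 1 - 1/p with hs
  have hs0 : 0 < s := by
    have : 1/p < 1 := (div_lt_one hp0).2 hp
    simp only [hs]; linarith
  have hs1 : s - 1 = -(1/p) := by simp [hs]
  -- continuity of z ↦ (1 - z^2) ^ s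
  have hrpow_cont : Continuous fun x : ℝ => x ^ s :=
    continuous_iff_continuousAt.2 fun x => Real.continuousAt_rpow_const x s (Or.inr hs0.le)
  have hg1cont : Continuous fun z : ℝ => (1 - z^2) ^ s :=
    hrpow_cont.comp (by fun_prop)
  have hφcont : Continuous fun z : ℝ => z * (1 - z^2) ^ s := continuous_id.mul hg1cont
  have hint2 : IntervalIntegrable (fun z : ℝ => 2*s*(z^2 * (1 - z^2)^(-(1/p)))) volume 0 1 :=
    (intBp hp).const_mul _
  have hintf' : IntervalIntegrable
      (fun z : ℝ => (1 - z^2)^s - 2*s*(z^2 * (1 - z^2)^(-(1/p)))) volume 0 1 :=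
    (hg1cont.intervalIntegrable 0 1).sub hint2
  have hftc : (∫ z in (0:ℝ)..1, ((1 - z^2)^s - 2*s*(z^2 * (1 - z^2)^(-(1/p)))))
      = (fun z : ℝ => z * (1 - z^2)^s) 1 - (fun z : ℝ => z * (1 - z^2)^s) 0 := by
    apply intervalIntegral.integral_eq_sub_of_hasDeriv_right_of_le (by norm_num)
      hφcont.continuousOn _ hintf'
    intro z hz
    obtain ⟨hz0, hz1⟩ := hz
    have hpos : (0:ℝ) < 1 - z^2 := by nlinarith
    have hbase : HasDerivAt (fun z : ℝ => 1 - z^2) (-(2*z)) z := by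
      simpa using (hasDerivAt_pow 2 z).const_sub 1
    have h := ((hasDerivAt_id z).mul
      (hbase.rpow_const (p := s) (Or.inl hpos.ne'))).hasDerivWithinAt (s := Ioi z)
    convert h using 1
    · rfl
    simp only [id_eq]
    rw [hs1]
    ring
  have hb1 : (fun z : ℝ => z * (1 - z^2)^s) 1 = 0 := by
    simp [Real.zero_rpow hs0.ne']
  have hb0 : (fun z : ℝ => z * (1 - z^2)^s) 0 = 0 := by simp
  rw [hb1, hb0, sub_zero] at hftc
  -- split the integral
  have hsplit : (∫ z in (0:ℝ)..1, ((1 - z^2)^s - 2*s*(z^2 * (1 - z^2)^(-(1/p)))))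
      = (∫ z in (0:ℝ)..1, (1 - z^2)^s) - 2*s*Bp p := by
    rw [intervalIntegral.integral_sub (hg1cont.intervalIntegrable 0 1) hint2,
      intervalIntegral.integral_const_mul]
    rfl
  have hg1eq : (∫ z in (0:ℝ)..1, (1 - z^2)^s)
      = Ap p - Bp p := by
    rw [show (∫ z in (0:ℝ)..1, (1 - z^2)^s)
        = ∫ z in (0:ℝ)..1, ((1 - z^2)^(-(1/p)) - z^2 * (1 - z^2)^(-(1/p))) from ?_,
      intervalIntegral.integral_sub (intA hp) (intBp hp)]
    · rfl
    · apply intervalIntegral.integral_congr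
      intro z hz
      rw [uIcc_of_le (by norm_num : (0:ℝ) ≤ 1)] at hz
      obtain ⟨hz0, hz1⟩ := hz
      show (1 - z^2)^s = (1 - z^2)^(-(1/p)) - z^2 * (1 - z^2)^(-(1/p))
      have hnn : (0:ℝ) ≤ 1 - z^2 := by nlinarith
      rcases eq_or_lt_of_le hnn with h0 | hpos
      · rw [← h0]
        rw [Real.zero_rpow hs0.ne', Real.zero_rpow (neg_ne_zero.2 (by positivity : (1/p : ℝ) ≠ 0))]
        ring
      · have : (1 - z^2)^s = (1 - z^2) * (1 - z^2)^(-(1/p)) := by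
          rw [show s = -(1/p) + 1 by rw [hs]; ring, Real.rpow_add_one hpos.ne']
          ring
        rw [this]; ring
  rw [hsplit, hg1eq] at hftc
  have : Ap p = (1 + 2*s) * Bp p := by linarith
  rw [this, hs]; ring
noncomputable def Dv (p q : ℝ) : ℝ :=
  (-2)*q*(Gp p q * K1 p q + E1 p q * Hp p q)/(K1 p q)^2

lemma hasDerivAt_Qp (hp : 1 < p) {q : ℝ} (hq : |q| < 1/2) :
    HasDerivAt (Qp p) (Dv p q) q := by
  have hK := hasDerivAt_K1 hp hq
  have hE := hasDerivAt_E1 hp hq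
  have hKne : K1 p q ≠ 0 := (K1_pos hp hq).ne'
  have h := ((hE.const_mul 2).div hK hKne).sub_const 1
  convert h using 1
  · rfl
  · rfl
  · rfl
  unfold Dv
  congr 1
  ring

lemma main_value (hp : 1 < p) : iteratedDeriv 2 (Qp p) 0 = 4*p/(2-3*p) := by
  have hA := Ap_pos hp
  have hB := Bp_pos hp
  have hball : Metric.ball (0:ℝ) (1/2) ∈ 𝓝 (0:ℝ) := Metric.ball_mem_nhds _ (by norm_num)
  have hev : deriv (Qp p) =ᶠ[𝓝 (0:ℝ)] Dv p := by
    filter_upwards [hball] with q hq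
    exact (hasDerivAt_Qp hp (by simpa [Real.dist_eq] using hq)).deriv
  set R : ℝ → ℝ := fun q => (-2)*(Gp p q * K1 p q + E1 p q * Hp p q)/(K1 p q)^2 with hRdef
  have hKc : ContinuousAt (K1 p) 0 := (hasDerivAt_K1 hp (by norm_num)).continuousAt
  have hEc : ContinuousAt (E1 p) 0 := (hasDerivAt_E1 hp (by norm_num)).continuousAt
  have hK0 : K1 p 0 = Ap p := K1_zero hp
  have hKne : (K1 p 0)^2 ≠ 0 := pow_ne_zero _ (K1_pos hp (by norm_num)).ne'
  have hR : ContinuousAt R 0 :=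
    ((((contGp hp).mul hKc).add (hEc.mul (contHp hp))).const_mul (-2)).div
      (hKc.pow 2) hKne
  have hR0 : R 0 = (-2)*(Bp p * Ap p + Ap p * Bp p)/(Ap p)^2 := by
    simp only [hRdef, K1_zero hp, E1_zero hp, Gp_zero hp, Hp_zero hp]
  have hDv : HasDerivAt (Dv p) (R 0) 0 := by
    rw [hasDerivAt_iff_tendsto_slope]
    apply Filter.Tendsto.congr' ?_ (hR.tendsto.mono_left nhdsWithin_le_nhds)
    filter_upwards [self_mem_nhdsWithin] with q hq
    have hqne : q ≠ 0 := hq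
    have h0 : Dv p 0 = 0 := by unfold Dv; simp
    rw [slope_def_field, h0, sub_zero, sub_zero,
      show Dv p q = q * R q from by unfold Dv; rw [hRdef]; ring,
      mul_comm q (R q), mul_div_assoc, div_self hqne, mul_one]
  have hval : R 0 = 4*p/(2-3*p) := by
    rw [hR0, Ap_eq hp]
    have hp0 : (0:ℝ) < p := by linarith
    have h2p : 2/p < 2 := by rw [div_lt_iff₀ hp0]; nlinarith
    have h3 : (0:ℝ) < 3 - 2/p := by linarith
    have h23 : 2 - 3*p ≠ 0 := by nlinarith
    rw [div_eq_div_iff (by positivity) h23]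
    field_simp
    ring
  have hiter : iteratedDeriv 2 (Qp p) 0 = deriv (deriv (Qp p)) 0 := by
    simp [iteratedDeriv_eq_iterate, Function.iterate_succ, Function.iterate_zero]
  rw [hiter, hev.deriv_eq, hDv.deriv, hval]

end QpAux

theorem Qp_secondDeriv_at_zero :
    (∀ p ∈ Set.Ioi (1:ℝ), iteratedDeriv 2 (Qp p) 0 = 4 * p / (2 - 3 * p)) ∧
    (∀ p ∈ Set.Ioi (1:ℝ), iteratedDeriv 2 (Qp p) 0 < 0) ∧
    StrictMonoOn (fun p => iteratedDeriv 2 (Qp p) 0) (Set.Ioi (1:ℝ)) := by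
  refine ⟨fun p hp => QpAux.main_value (Set.mem_Ioi.1 hp), fun p hp => ?_, ?_⟩
  · rw [QpAux.main_value (Set.mem_Ioi.1 hp)]
    have h1 : (1:ℝ) < p := Set.mem_Ioi.1 hp
    apply div_neg_of_pos_of_neg <;> nlinarith
  · intro a ha b hb hab
    have h1 : (1:ℝ) < a := Set.mem_Ioi.1 ha
    have h2 : (1:ℝ) < b := Set.mem_Ioi.1 hb
    simp only [QpAux.main_value h1, QpAux.main_value h2]
    have hda : 2 - 3*a < 0 := by nlinarith
    have hdb : 2 - 3*b < 0 := by nlinarith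
    rw [show (2-3*a) = -(3*a-2) by ring, show (2-3*b) = -(3*b-2) by ring,
      div_neg, div_neg, neg_lt_neg_iff,
      div_lt_div_iff₀ (by nlinarith : (0:ℝ) < 3*b-2) (by nlinarith : (0:ℝ) < 3*a-2)]
    nlinarith
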